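/- arXiv:2402.15482 — 5 statements merged into one kernel-verified Lean document; each statement's English description precedes it below -/
import Mathlib

section
/- Let H be a complex Hilbert space and T a bounded linear operator on H. Then T attains its norm (i.e., there exists a unit vector x with ‖Tx‖ = ‖T‖) if and only if its adjoint T* attains its norm. -/
open ContinuousLinearMap

lemma attain_adjoint_of_attain
    {H : Type*} [NormedAddCommGroup H] [InnerProductSpace ℂ H] [CompleteSpace H]
    (T : H →L[ℂ] H) (h : ∃ x : H, ‖x‖ = 1 ∧ ‖T x‖ = ‖T‖) :
    ∃ x : H, ‖x‖ = 1 ∧ ‖(adjoint T) x‖ = ‖adjoint T‖ := by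
  obtain ⟨x, hx, hTx⟩ := h
  by_cases hT : ‖T‖ = 0
  · refine ⟨x, hx, ?_⟩
    have h1 : ‖adjoint T‖ = 0 := by rw [adjoint.norm_map]; exact hT
    have h2 : ‖(adjoint T) x‖ ≤ ‖adjoint T‖ * ‖x‖ := le_opNorm _ x
    rw [h1, zero_mul] at h2
    rw [h1]
    exact le_antisymm h2 (norm_nonneg _)
  · have hTxne : ‖T x‖ ≠ 0 := hTx ▸ hT
    refine ⟨(‖T x‖⁻¹ : ℝ) • T x, ?_, ?_⟩
    · rw [norm_smul, norm_inv, norm_norm, inv_mul_cancel₀ hTxne]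
    · have key : ‖(adjoint T) (T x)‖ ≥ ‖T x‖ ^ 2 := by
        have := norm_inner_le_norm (𝕜 := ℂ) ((adjoint T) (T x)) x
        rw [hx, mul_one] at this
        calc ‖T x‖ ^ 2 = ‖(inner ℂ (T x) (T x) : ℂ)‖ := by
              rw [inner_self_eq_norm_sq_to_K]
              simp [norm_pow]
          _ = ‖(inner ℂ ((adjoint T) (T x)) x : ℂ)‖ := by rw [adjoint_inner_left]
          _ ≤ ‖(adjoint T) (T x)‖ := this
      have le1 : ‖(adjoint T) ((‖T x‖⁻¹ : ℝ) • T x)‖ ≤ ‖adjoint T‖ := by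
        have := le_opNorm (adjoint T) ((‖T x‖⁻¹ : ℝ) • T x)
        rwa [norm_smul, norm_inv, norm_norm, inv_mul_cancel₀ hTxne, mul_one] at this
      have ge1 : ‖(adjoint T) ((‖T x‖⁻¹ : ℝ) • T x)‖ ≥ ‖adjoint T‖ := by
        rw [map_smul_of_tower, norm_smul, norm_inv, norm_norm, adjoint.norm_map, ← hTx]
        rw [ge_iff_le, le_inv_mul_iff₀ (lt_of_le_of_ne (norm_nonneg _) (Ne.symm hTxne))]
        calc ‖T x‖ * ‖T x‖ = ‖T x‖ ^ 2 := (sq _).symm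
          _ ≤ ‖(adjoint T) (T x)‖ := key
      exact le_antisymm le1 ge1

theorem norm_attaining_iff_adjoint_norm_attaining
    {H : Type*} [NormedAddCommGroup H] [InnerProductSpace ℂ H] [CompleteSpace H]
    (T : H →L[ℂ] H) :
    (∃ x : H, ‖x‖ = 1 ∧ ‖T x‖ = ‖T‖) ↔
      (∃ x : H, ‖x‖ = 1 ∧ ‖(ContinuousLinearMap.adjoint T) x‖ = ‖ContinuousLinearMap.adjoint T‖) := by
  constructor
  · exact attain_adjoint_of_attain T
  · intro h
    have := attain_adjoint_of_attain (adjoint T) h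
    rwa [adjoint_adjoint] at this
end

section
/- Let A be a bounded operator on a complex Hilbert space with ‖A‖ ≤ 1, let b ∈ H, and suppose v ∈ H satisfies S v = A* b, where S is the (positive) square root of I − A*A. Then for every z ∈ H, ‖A z + b‖² = −‖S z − v‖² + ‖v‖² + ‖b‖² + ‖z‖². -/
open scoped InnerProductSpace in
theorem key_norm_identity
    {H : Type*} [NormedAddCommGroup H] [InnerProductSpace ℂ H] [CompleteSpace H]
    (A S : H →L[ℂ] H) (hA : ‖A‖ ≤ 1) (hS : S.IsPositive)
    (hS2 : S ∘L S = 1 - ContinuousLinearMap.adjoint A ∘L A)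
    (b v : H) (hv : S v = (ContinuousLinearMap.adjoint A) b) :
    ∀ z : H, ‖A z + b‖ ^ 2 = -‖S z - v‖ ^ 2 + ‖v‖ ^ 2 + ‖b‖ ^ 2 + ‖z‖ ^ 2 := by
  intro z
  have hsa : ContinuousLinearMap.adjoint S = S := hS.1.clm_adjoint_eq
  have hsym : ∀ x y : H, ⟪S x, y⟫_ℂ = ⟪x, S y⟫_ℂ := by
    intro x y
    rw [← hsa, ContinuousLinearMap.adjoint_inner_left, hsa]
  have h1 : ‖S z‖ ^ 2 = ‖z‖ ^ 2 - ‖A z‖ ^ 2 := by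
    have : ⟪S z, S z⟫_ℂ = ⟪z, z⟫_ℂ - ⟪A z, A z⟫_ℂ := by
      rw [hsym]
      have : S (S z) = z - ContinuousLinearMap.adjoint A (A z) := by
        have := congrArg (fun T => T z) hS2
        simpa using this
      rw [this, inner_sub_right, ContinuousLinearMap.adjoint_inner_right]
    have h := congrArg Complex.re this
    simpa [← inner_self_eq_norm_sq (𝕜 := ℂ)] using h
  have h2 : ⟪S z, v⟫_ℂ = ⟪A z, b⟫_ℂ := by
    rw [hsym, hv, ContinuousLinearMap.adjoint_inner_right]
  have e1 := norm_add_sq (𝕜 := ℂ) (A z) b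
  have e2 := norm_sub_sq (𝕜 := ℂ) (S z) v
  rw [h2] at e2
  rw [e1]
  rw [e2] at *
  linarith [h1]
end

section
/- Let A be a bounded operator on a complex Hilbert space with ‖A‖ ≤ 1, let S be the positive square root of I − A*A, and let v ∈ H be orthogonal to the kernel of S. Then v lies in the closure of the range of I − A. -/
open scoped ComplexInnerProductSpace

theorem min_vector_in_closure_range
    {H : Type*} [NormedAddCommGroup H] [InnerProductSpace ℂ H] [CompleteSpace H]
    (A S : H →L[ℂ] H) (hA : ‖A‖ ≤ 1) (hS : S.IsPositive)
    (hS2 : S ∘L S = 1 - ContinuousLinearMap.adjoint A ∘L A)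
    (v : H) (hvker : ∀ u : H, S u = 0 → (inner ℂ v u : ℂ) = 0) :
    v ∈ closure (Set.range fun x : H => x - A x) := by
  -- Step 1: every u fixed by A* is killed by S
  have hadj : ∀ u : H, (ContinuousLinearMap.adjoint A) u = u → S u = 0 := by
    intro u hu
    have hAu : ‖A u‖ ≤ ‖u‖ := by simpa using A.le_of_opNorm_le hA u
    have h1 : (‖u‖ : ℝ) ^ 2 ≤ ‖u‖ * ‖A u‖ := by
      have e1 : (⟪u, A u⟫) = ⟪u, u⟫ := by
        rw [← ContinuousLinearMap.adjoint_inner_left, hu]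
      have e2 : RCLike.re (⟪u, A u⟫) ≤ ‖u‖ * ‖A u‖ := re_inner_le_norm u (A u)
      rw [e1] at e2
      simpa [inner_self_eq_norm_sq, sq] using e2
    have hge : ‖u‖ ^ 2 ≤ ‖A u‖ ^ 2 := by
      rcases eq_or_ne u 0 with rfl | hu0
      · simp
      · have hpos : (0 : ℝ) < ‖u‖ := norm_pos_iff.mpr hu0
        have : ‖u‖ ≤ ‖A u‖ := by
          have h1' : ‖u‖ * ‖u‖ ≤ ‖u‖ * ‖A u‖ := by nlinarith
          exact le_of_mul_le_mul_left h1' hpos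
        exact pow_le_pow_left₀ (norm_nonneg _) this 2
    have hSu : (‖S u‖ : ℝ) ^ 2 = ‖u‖ ^ 2 - ‖A u‖ ^ 2 := by
      have e3 : (⟪S u, S u⟫) = ⟪u, (S ∘L S) u⟫ := by
        rw [ContinuousLinearMap.comp_apply, ← ContinuousLinearMap.adjoint_inner_right,
          hS.isSelfAdjoint.adjoint_eq]
      have e4 : (⟪S u, S u⟫) = ⟪u, u⟫ - ⟪A u, A u⟫ := by
        rw [e3, hS2]
        simp [inner_sub_right, ContinuousLinearMap.adjoint_inner_right]
      have h5 := congrArg RCLike.re e4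
      simp only [map_sub, inner_self_eq_norm_sq] at h5
      exact h5
    have : ‖S u‖ ^ 2 ≤ 0 := by rw [hSu]; linarith
    have : ‖S u‖ = 0 := by nlinarith [norm_nonneg (S u), sq_nonneg ‖S u‖]
    simpa using this
  -- Step 2: identify the set with the range submodule of 1 - A
  set T : H →L[ℂ] H := 1 - A with hT
  have hset : (Set.range fun x : H => x - A x) = (LinearMap.range (T : H →ₗ[ℂ] H) : Set H) := by
    ext y
    simp [hT, ContinuousLinearMap.sub_apply, LinearMap.mem_range, Set.mem_range]
  rw [hset]
  have hmem : v ∈ (LinearMap.range (T : H →ₗ[ℂ] H))ᗮᗮ := by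
    rw [Submodule.mem_orthogonal]
    intro u hu
    have hu' : ContinuousLinearMap.adjoint A u = u := by
      have h0 : ∀ x : H, (⟪x, u⟫) = ⟪x, ContinuousLinearMap.adjoint A u⟫ := by
        intro x
        have hx : (⟪x - A x, u⟫) = 0 := hu (x - A x) ⟨x, by simp [hT]⟩
        rw [inner_sub_left, sub_eq_zero] at hx
        rw [hx, ContinuousLinearMap.adjoint_inner_right]
      exact (ext_inner_left ℂ h0).symm
    have hSu : S u = 0 := hadj u hu'
    have := hvker u hSu
    exact inner_eq_zero_symm.mp this
  rw [Submodule.orthogonal_orthogonal_eq_closure] at hmem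
  rw [← Submodule.topologicalClosure_coe]; exact hmem
end

section
/- Let H be a complex Hilbert space, T a bounded operator on H, c a real number, and k₁, k₂, h₁, h₂ ∈ H with T* k₁ = h₁, T* k₂ = h₂, and T(h₁ + h₂) = c • (k₁ + k₂). Then ‖h₁‖² − c·‖k₁‖² = ‖h₂‖² − c·‖k₂‖². -/
open scoped ComplexConjugate

theorem extremal_normSq_identity
    {H : Type*} [NormedAddCommGroup H] [InnerProductSpace ℂ H] [CompleteSpace H]
    (T : H →L[ℂ] H) (c : ℝ) (k₁ k₂ h₁ h₂ : H)
    (h1 : (ContinuousLinearMap.adjoint T) k₁ = h₁)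
    (h2 : (ContinuousLinearMap.adjoint T) k₂ = h₂)
    (heig : T h₁ + T h₂ = (c : ℂ) • k₁ + (c : ℂ) • k₂) :
    ‖h₁‖ ^ 2 - c * ‖k₁‖ ^ 2 = ‖h₂‖ ^ 2 - c * ‖k₂‖ ^ 2 := by
  have key : (inner ℂ (h₁ - h₂) (h₁ + h₂) : ℂ)
      = (c : ℂ) * inner ℂ (k₁ - k₂) (k₁ + k₂) := by
    have hadj := ContinuousLinearMap.adjoint_inner_left T (h₁ + h₂) (k₁ - k₂)
    rw [map_sub, h1, h2] at hadj
    rw [hadj, map_add, heig, ← inner_smul_right]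
    congr 1
    rw [smul_add]
  have hre := congrArg Complex.re key
  have e1 : (inner ℂ (h₁ - h₂) (h₁ + h₂) : ℂ).re = ‖h₁‖ ^ 2 - ‖h₂‖ ^ 2 := by
    rw [inner_sub_left, inner_add_right, inner_add_right]
    simp only [← RCLike.re_to_complex, map_add, map_sub,
      inner_self_eq_norm_sq, inner_re_symm h₂ h₁]
    ring
  have e2 : ((c : ℂ) * inner ℂ (k₁ - k₂) (k₁ + k₂)).re
      = c * (‖k₁‖ ^ 2 - ‖k₂‖ ^ 2) := by
    rw [inner_sub_left, inner_add_right, inner_add_right, Complex.mul_re,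
      Complex.ofReal_re, Complex.ofReal_im]
    simp only [← RCLike.re_to_complex, map_add, map_sub,
      inner_self_eq_norm_sq, inner_re_symm k₂ k₁]
    ring
  rw [e1, e2] at hre
  linarith
end

section
/- Let A be a bounded operator on a complex Hilbert space H with ‖A‖ ≤ 1, b ∈ H, and suppose v, w ∈ H satisfy S v = A* b where S is the positive square root of I − A*A. Then ‖A w + b‖² − ‖w‖² ≤ ‖v‖² + ‖b‖², with equality if and only if S w = v. -/
open scoped InnerProductSpace

theorem extremal_iff_sqrt_eq
    {H : Type*} [NormedAddCommGroup H] [InnerProductSpace ℂ H] [CompleteSpace H]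
    (A S : H →L[ℂ] H) (hA : ‖A‖ ≤ 1) (hS : S.IsPositive)
    (hS2 : S ∘L S = 1 - ContinuousLinearMap.adjoint A ∘L A)
    (b v w : H) (hv : S v = (ContinuousLinearMap.adjoint A) b) :
    ‖A w + b‖ ^ 2 - ‖w‖ ^ 2 ≤ ‖v‖ ^ 2 + ‖b‖ ^ 2 ∧
      (‖A w + b‖ ^ 2 - ‖w‖ ^ 2 = ‖v‖ ^ 2 + ‖b‖ ^ 2 ↔ S w = v) := by
  have hSym : ∀ x y : H, ⟪S x, y⟫_ℂ = ⟪x, S y⟫_ℂ := hS.1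
  have h2 : S (S w) = w - ContinuousLinearMap.adjoint A (A w) := by
    have := congrFun (congrArg (fun T : H →L[ℂ] H => (T : H → H)) hS2) w
    simpa using this
  have h1 : ‖A w‖ ^ 2 = ‖w‖ ^ 2 - ‖S w‖ ^ 2 := by
    have e2 : ⟪S w, S w⟫_ℂ = ⟪w, w⟫_ℂ - ⟪A w, A w⟫_ℂ := by
      rw [hSym w (S w), h2, inner_sub_right, ContinuousLinearMap.adjoint_inner_right]
    have := congrArg RCLike.re e2
    simp only [map_sub, inner_self_eq_norm_sq] at this
    linarith
  have h3 : RCLike.re ⟪A w, b⟫_ℂ = RCLike.re ⟪S w, v⟫_ℂ := by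
    have e : ⟪b, A w⟫_ℂ = ⟪v, S w⟫_ℂ := by
      rw [← ContinuousLinearMap.adjoint_inner_left, ← hv, hSym]
    rw [inner_re_symm, e, ← inner_re_symm]
  have hadd : ‖A w + b‖ ^ 2 = ‖A w‖ ^ 2 + 2 * RCLike.re ⟪A w, b⟫_ℂ + ‖b‖ ^ 2 :=
    norm_add_sq (𝕜 := ℂ) _ _
  have hsub : ‖S w - v‖ ^ 2 = ‖S w‖ ^ 2 - 2 * RCLike.re ⟪S w, v⟫_ℂ + ‖v‖ ^ 2 :=
    norm_sub_sq (𝕜 := ℂ) _ _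
  have key : ‖A w + b‖ ^ 2 - ‖w‖ ^ 2 = ‖v‖ ^ 2 + ‖b‖ ^ 2 - ‖S w - v‖ ^ 2 := by
    rw [hadd, h1, h3, hsub]; ring
  refine ⟨by nlinarith [sq_nonneg ‖S w - v‖], ?_⟩
  rw [key]
  constructor
  · intro h
    have : ‖S w - v‖ ^ 2 = 0 := by linarith
    have := pow_eq_zero_iff (n := 2) (by norm_num) |>.mp this
    rw [norm_eq_zero, sub_eq_zero] at this
    exact this
  · intro h
    simp [h]
end
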